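/- Let G be a graph whose vertices carry integer weights w, let H be a homogeneous set of G, and let h be any vertex of H. Define a weight function w' on the induced subgraph G' = G[(V(G) − H) ∪ {h}] by w'(x) = w(x) for x ∈ V(G) − H and w'(h) = α_w(G[H]), the maximum total weight of a stable set of the subgraph induced by H. Then α_w(G) = α_{w'}(G'), i.e., the maximum total weight of a stable set of G equals the maximum total w'-weight of a stable set of G'. -/

import Mathlib

open SimpleGraph

/-- The banner: a chordless 4-cycle 0-1-2-3-0 together with a fifth vertex 4
adjacent to exactly one vertex (vertex 0) of the cycle. -/
def banner : SimpleGraph (Fin 5) :=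
  SimpleGraph.fromRel (fun i j =>
    (i = 0 ∧ j = 1) ∨ (i = 1 ∧ j = 2) ∨ (i = 2 ∧ j = 3) ∨ (i = 3 ∧ j = 0) ∨ (i = 0 ∧ j = 4))

/-- A graph is banner-free if it has no induced subgraph isomorphic to the banner. -/
def BannerFree {V : Type*} (G : SimpleGraph V) : Prop := ¬ Nonempty (banner ↪g G)

/-- A graph is C5-free if it has no induced subgraph isomorphic to the chordless 5-cycle. -/
def C5Free {V : Type*} (G : SimpleGraph V) : Prop :=
  ¬ Nonempty (SimpleGraph.cycleGraph 5 ↪g G)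

/-- A graph is odd-hole-free if it has no induced chordless cycle of odd length `n ≥ 5`
(odd holes are the odd chordless cycles with at least four, hence at least five, vertices). -/
def OddHoleFree {V : Type*} (G : SimpleGraph V) : Prop :=
  ∀ n : ℕ, 5 ≤ n → Odd n → ¬ Nonempty (SimpleGraph.cycleGraph n ↪g G)

/-- `A` is an odd antihole of `G`: the subgraph induced by `A` is isomorphic to the
complement of a chordless cycle on an odd number `n ≥ 5` of vertices. -/
def IsOddAntihole {V : Type*} (G : SimpleGraph V) (A : Set V) : Prop :=
  ∃ n : ℕ, 5 ≤ n ∧ Odd n ∧ Nonempty ((SimpleGraph.cycleGraph n)ᶜ ≃g G.induce A)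

/-- `H` is a homogeneous set of `G`: `2 ≤ |H| < |V(G)|` and every vertex outside `H`
is adjacent to all vertices of `H` or to none of them. -/
def IsHomogeneous {V : Type*} (G : SimpleGraph V) (H : Set V) : Prop :=
  2 ≤ H.ncard ∧ H ≠ Set.univ ∧
    ∀ v ∉ H, (∀ h ∈ H, G.Adj v h) ∨ (∀ h ∈ H, ¬ G.Adj v h)

/-- A graph is perfect if every induced subgraph has chromatic number equal to
its clique number. -/
def IsPerfect {V : Type*} (G : SimpleGraph V) : Prop :=
  ∀ S : Set V, (G.induce S).chromaticNumber = ((G.induce S).cliqueNum : ℕ∞)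

/-- A graph is perfectly divisible if every induced subgraph `G[S]` contains a set `X`
of vertices meeting all largest cliques of `G[S]` and inducing a perfect graph. -/
def PerfectlyDivisible {V : Type*} (G : SimpleGraph V) : Prop :=
  ∀ S : Set V, ∃ X ⊆ S, IsPerfect (G.induce X) ∧
    ∀ t : Finset V, ↑t ⊆ S → G.IsNClique ((G.induce S).cliqueNum) t → ∃ x ∈ X, x ∈ t

/-- A graph is `k`-divisible if the vertex set of each of its induced subgraphs `G[S]`
having at least one edge can be partitioned into `k` sets, none of which contains a
clique of size `ω(G[S])`.  (A graph with no edges is trivially `k`-divisible.) -/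
def KDivisible {V : Type*} (G : SimpleGraph V) (k : ℕ) : Prop :=
  ∀ S : Set V, (∃ a ∈ S, ∃ b ∈ S, G.Adj a b) →
    ∃ P : Fin k → Set V, (∀ v ∈ S, ∃! i, v ∈ P i) ∧
      ∀ i, P i ⊆ S ∧ ¬ ∃ t : Finset V, ↑t ⊆ P i ∧ G.IsNClique ((G.induce S).cliqueNum) t

/-- The maximum total weight `α_w(G)` of a stable (independent) set of the weighted
graph `G`; stable sets of `G` are exactly the cliques of the complement of `G`. -/
noncomputable def alphaW {V : Type*} (G : SimpleGraph V) (w : V → ℤ) : ℤ :=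
  sSup {x : ℤ | ∃ s : Finset V, Gᶜ.IsClique (↑s : Set V) ∧ x = ∑ v ∈ s, w v}

/-- `C` is a clique cutset of the connected graph `G` if `C` is a clique and
deleting `C` from `G` leaves a disconnected graph. -/
def IsCliqueCutset {V : Type*} (G : SimpleGraph V) (C : Set V) : Prop :=
  G.Connected ∧ G.IsClique C ∧ ¬ (G.induce Cᶜ).Preconnected

section helpers
variable {V : Type*}

lemma myStable_iff (G : SimpleGraph V) (s : Finset V) :
    Gᶜ.IsClique (↑s : Set V) ↔ ∀ a ∈ s, ∀ b ∈ s, a ≠ b → ¬ G.Adj a b := by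
  constructor
  · intro hc a ha b hb hne
    exact ((hc (Finset.mem_coe.2 ha) (Finset.mem_coe.2 hb) hne).2)
  · intro hc a ha b hb hne
    exact ⟨hne, hc a (Finset.mem_coe.1 ha) b (Finset.mem_coe.1 hb) hne⟩

lemma myVset_finite [Finite V] (G : SimpleGraph V) (w : V → ℤ) :
    Set.Finite {x : ℤ | ∃ s : Finset V, Gᶜ.IsClique (↑s : Set V) ∧ x = ∑ v ∈ s, w v} := by
  have := Fintype.ofFinite V
  apply Set.Finite.subset (Set.finite_range fun s : Finset V => ∑ v ∈ s, w v)
  rintro x ⟨s, _, rfl⟩; exact ⟨s, rfl⟩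

lemma myVset_nonempty (G : SimpleGraph V) (w : V → ℤ) :
    Set.Nonempty {x : ℤ | ∃ s : Finset V, Gᶜ.IsClique (↑s : Set V) ∧ x = ∑ v ∈ s, w v} :=
  ⟨0, ∅, by simp⟩

lemma myLe_alphaW [Finite V] (G : SimpleGraph V) (w : V → ℤ) (s : Finset V)
    (hs : Gᶜ.IsClique (↑s : Set V)) : ∑ v ∈ s, w v ≤ alphaW G w := by
  unfold alphaW
  exact le_csSup (myVset_finite G w).bddAbove ⟨s, hs, rfl⟩

lemma myAlphaW_le [Finite V] (G : SimpleGraph V) (w : V → ℤ) (M : ℤ)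
    (hM : ∀ s : Finset V, Gᶜ.IsClique (↑s : Set V) → ∑ v ∈ s, w v ≤ M) :
    alphaW G w ≤ M := by
  unfold alphaW
  apply csSup_le (myVset_nonempty G w)
  rintro x ⟨s, hs, rfl⟩; exact hM s hs

lemma myExists_alphaW [Finite V] (G : SimpleGraph V) (w : V → ℤ) :
    ∃ s : Finset V, Gᶜ.IsClique (↑s : Set V) ∧ alphaW G w = ∑ v ∈ s, w v :=
  Set.Nonempty.csSup_mem (myVset_nonempty G w) (myVset_finite G w)

end helpers

/-- Let `G` be a graph with integer vertex weights `w`, let `H` be a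
homogeneous set of `G`, and let `h ∈ H`.  Let `w'` be the weight function on
`G' = G[(V(G) − H) ∪ {h}]` given by `w'(x) = w(x)` for `x ∈ V(G) − H` and
`w'(h) = α_w(G[H])`.  Then `α_w(G) = α_{w'}(G')`. -/
theorem stmt_14 {V : Type*} [Fintype V] (G : SimpleGraph V) (w : V → ℤ)
    (H : Set V) (hH : IsHomogeneous G H) (h : V) (hh : h ∈ H)
    (w' : ↥(Hᶜ ∪ {h}) → ℤ)
    (hw'h : ∀ x : ↥(Hᶜ ∪ {h}), (x : V) = h →
      w' x = alphaW (G.induce H) (fun y => w ↑y))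
    (hw'x : ∀ x : ↥(Hᶜ ∪ {h}), (x : V) ≠ h → w' x = w ↑x) :
    alphaW G w = alphaW (G.induce (Hᶜ ∪ {h})) w' := by
  classical
  obtain ⟨-, -, hhom⟩ := hH
  have hU : h ∈ Hᶜ ∪ {h} := Or.inr rfl
  have hmemU : ∀ x : V, x ∉ H → x ∈ Hᶜ ∪ {h} := fun x hx => Or.inl hx
  apply le_antisymm
  · -- alphaW G w ≤ alphaW G' w'
    apply myAlphaW_le
    intro s hs
    rw [myStable_iff] at hs
    set s₁ : Finset V := s.filter (fun x => x ∉ H) with hs₁def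
    set s₂ : Finset V := s.filter (fun x => x ∈ H) with hs₂def
    have hsum : ∑ v ∈ s, w v = ∑ v ∈ s₂, w v + ∑ v ∈ s₁, w v :=
      (Finset.sum_filter_add_sum_filter_not s (fun x => x ∈ H) w).symm
    have hs₂le : ∑ v ∈ s₂, w v ≤ alphaW (G.induce H) (fun y => w ↑y) := by
      have hcl : (G.induce H)ᶜ.IsClique (↑(s₂.subtype (· ∈ H)) : Set ↥H) := by
        rw [myStable_iff]
        intro a ha b hb hne hadj
        rw [Finset.mem_subtype] at ha hb
        have hne' : (a : V) ≠ b := fun e => hne (Subtype.ext e)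
        have hadj' : G.Adj ↑a ↑b := by simpa [SimpleGraph.comap_adj] using hadj
        exact hs ↑a (Finset.mem_of_mem_filter _ ha) ↑b (Finset.mem_of_mem_filter _ hb)
          hne' hadj'
      have hle := myLe_alphaW (G.induce H) (fun y => w ↑y) _ hcl
      rwa [Finset.sum_subtype_of_mem _ (fun x hx => (Finset.mem_filter.1 hx).2)] at hle
    set t₁ : Finset ↥(Hᶜ ∪ {h}) := s₁.subtype (fun x => x ∈ Hᶜ ∪ {h}) with ht₁def
    have ht₁mem : ∀ a : ↥(Hᶜ ∪ {h}), a ∈ t₁ → (a : V) ∈ s₁ := by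
      intro a ha; rw [ht₁def, Finset.mem_subtype] at ha; exact ha
    have ht₁notH : ∀ a ∈ t₁, (a : V) ∉ H :=
      fun a ha => (Finset.mem_filter.1 (ht₁mem a ha)).2
    have ht₁s : ∀ a ∈ t₁, (a : V) ∈ s :=
      fun a ha => Finset.mem_of_mem_filter _ (ht₁mem a ha)
    have ht₁stab : ∀ a ∈ t₁, ∀ b ∈ t₁, a ≠ b → ¬ (G.induce (Hᶜ ∪ {h})).Adj a b := by
      intro a ha b hb hne hadj
      have hne' : (a : V) ≠ b := fun e => hne (Subtype.ext e)
      have hadj' : G.Adj ↑a ↑b := by simpa [SimpleGraph.comap_adj] using hadj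
      exact hs ↑a (ht₁s a ha) ↑b (ht₁s b hb) hne' hadj'
    have ht₁sum : ∑ x ∈ t₁, w' x = ∑ v ∈ s₁, w v := by
      rw [Finset.sum_congr rfl
        (fun a ha => hw'x a (fun e => ht₁notH a ha (by rw [e]; exact hh)))]
      rw [ht₁def, Finset.sum_subtype_of_mem _
        (fun x hx => hmemU x (Finset.mem_filter.1 hx).2)]
    by_cases hcase : s₂ = ∅
    · have heq : ∑ v ∈ s, w v = ∑ x ∈ t₁, w' x := by
        rw [hsum, hcase, ht₁sum]; simp
      rw [heq]
      apply myLe_alphaW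
      rw [myStable_iff]; exact ht₁stab
    · obtain ⟨y, hy⟩ := Finset.nonempty_iff_ne_empty.2 hcase
      have hyH : y ∈ H := (Finset.mem_filter.1 hy).2
      have hys : y ∈ s := Finset.mem_of_mem_filter _ hy
      have hhnotin : (⟨h, hU⟩ : ↥(Hᶜ ∪ {h})) ∉ t₁ := fun hmem => ht₁notH _ hmem hh
      have key : ∀ c ∈ t₁, ∀ z ∈ H, ¬ G.Adj ↑c z := by
        intro c hc z hz
        rcases hhom ↑c (ht₁notH c hc) with hall | hnone
        · intro _
          exact hs ↑c (ht₁s c hc) y hys (fun e => ht₁notH c hc (e ▸ hyH)) (hall y hyH)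
        · exact hnone z hz
      have hstab' : (G.induce (Hᶜ ∪ {h}))ᶜ.IsClique
          (↑(insert (⟨h, hU⟩ : ↥(Hᶜ ∪ {h})) t₁) : Set ↥(Hᶜ ∪ {h})) := by
        rw [myStable_iff]
        intro a ha b hb hne hadj
        have hadj' : G.Adj ↑a ↑b := by simpa [SimpleGraph.comap_adj] using hadj
        rcases Finset.mem_insert.1 ha with rfl | ha'
        · rcases Finset.mem_insert.1 hb with rfl | hb'
          · exact hne rfl
          · exact key b hb' h hh hadj'.symm
        · rcases Finset.mem_insert.1 hb with rfl | hb'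
          · exact key a ha' h hh hadj'
          · exact ht₁stab a ha' b hb' hne hadj
      have hle := myLe_alphaW (G.induce (Hᶜ ∪ {h})) w' _ hstab'
      rw [Finset.sum_insert hhnotin, hw'h ⟨h, hU⟩ rfl, ht₁sum] at hle
      calc ∑ v ∈ s, w v = ∑ v ∈ s₂, w v + ∑ v ∈ s₁, w v := hsum
        _ ≤ alphaW (G.induce H) (fun y => w ↑y) + ∑ v ∈ s₁, w v := by
            exact add_le_add_left hs₂le _
        _ ≤ alphaW (G.induce (Hᶜ ∪ {h})) w' := hle
  · -- alphaW G' w' ≤ alphaW G w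
    apply myAlphaW_le
    intro s' hs'
    rw [myStable_iff] at hs'
    obtain ⟨T, hT, hTsum⟩ := myExists_alphaW (G.induce H) (fun y => w ↑y)
    rw [myStable_iff] at hT
    by_cases hhs : (⟨h, hU⟩ : ↥(Hᶜ ∪ {h})) ∈ s'
    · set e : Finset ↥(Hᶜ ∪ {h}) := s'.erase ⟨h, hU⟩ with hedef
      have heNe : ∀ a ∈ e, (a : V) ≠ h :=
        fun a ha hah => (Finset.ne_of_mem_erase ha) (Subtype.ext hah)
      have heH : ∀ a ∈ e, (a : V) ∉ H := by
        intro a ha haH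
        rcases a.2 with h1 | h1
        · exact h1 haH
        · exact heNe a ha h1
      have hdisj : Disjoint (e.image Subtype.val) (T.image Subtype.val) := by
        rw [Finset.disjoint_left]
        intro x hx hx2
        obtain ⟨a, ha, rfl⟩ := Finset.mem_image.1 hx
        obtain ⟨b, hb, hbe⟩ := Finset.mem_image.1 hx2
        exact heH a ha (hbe ▸ b.2)
      have hkey : ∀ a ∈ e, ∀ z ∈ H, ¬ G.Adj ↑a z := by
        intro a ha z hz
        rcases hhom ↑a (heH a ha) with hall | hnone
        · intro _
          have hadjh : (G.induce (Hᶜ ∪ {h})).Adj a ⟨h, hU⟩ := by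
            simp [SimpleGraph.comap_adj]
            exact hall h hh
          exact hs' a (Finset.mem_of_mem_erase ha) ⟨h, hU⟩ hhs
            (Finset.ne_of_mem_erase ha) hadjh
        · exact hnone z hz
      have hstab : Gᶜ.IsClique (↑(e.image Subtype.val ∪ T.image Subtype.val) : Set V) := by
        rw [myStable_iff]
        intro a ha b hb hne hadj
        rcases Finset.mem_union.1 ha with ha' | ha' <;>
          rcases Finset.mem_union.1 hb with hb' | hb'
        · obtain ⟨x, hx, rfl⟩ := Finset.mem_image.1 ha'
          obtain ⟨y2, hy2, rfl⟩ := Finset.mem_image.1 hb'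
          exact hs' x (Finset.mem_of_mem_erase hx) y2 (Finset.mem_of_mem_erase hy2)
            (fun e2 => hne (congrArg _ e2)) (by simpa [SimpleGraph.comap_adj] using hadj)
        · obtain ⟨x, hx, rfl⟩ := Finset.mem_image.1 ha'
          obtain ⟨y2, hy2, rfl⟩ := Finset.mem_image.1 hb'
          exact hkey x hx ↑y2 y2.2 hadj
        · obtain ⟨x, hx, rfl⟩ := Finset.mem_image.1 ha'
          obtain ⟨y2, hy2, rfl⟩ := Finset.mem_image.1 hb'
          exact hkey y2 hy2 ↑x x.2 hadj.symm
        · obtain ⟨x, hx, rfl⟩ := Finset.mem_image.1 ha'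
          obtain ⟨y2, hy2, rfl⟩ := Finset.mem_image.1 hb'
          have : (G.induce H).Adj x y2 := by simpa [SimpleGraph.comap_adj] using hadj
          exact hT x hx y2 hy2 (fun e2 => hne (congrArg _ e2)) this
      have hle := myLe_alphaW G w _ hstab
      have hsum0 : ∑ v ∈ e.image Subtype.val ∪ T.image Subtype.val, w v
          = ∑ x ∈ s', w' x := by
        rw [Finset.sum_union hdisj,
          Finset.sum_image (fun x _ y _ hxy => Subtype.ext hxy),
          Finset.sum_image (fun x _ y _ hxy => Subtype.ext hxy)]
        have h1 : ∑ a ∈ e, w ↑a = ∑ a ∈ e, w' a :=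
          Finset.sum_congr rfl (fun a ha => (hw'x a (heNe a ha)).symm)
        have h2 : ∑ b ∈ T, w ↑b = w' ⟨h, hU⟩ := by
          rw [hw'h ⟨h, hU⟩ rfl, hTsum]
        rw [h1, h2, Finset.sum_erase_add s' w' hhs]
      rw [← hsum0]; exact hle
    · have hne_h : ∀ a ∈ s', (a : V) ≠ h := by
        intro a ha hah
        exact hhs (by rwa [show a = ⟨h, hU⟩ from Subtype.ext hah] at ha)
      have hstab : Gᶜ.IsClique (↑(s'.image Subtype.val) : Set V) := by
        rw [myStable_iff]
        intro a ha b hb hne hadj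
        obtain ⟨x, hx, rfl⟩ := Finset.mem_image.1 ha
        obtain ⟨y2, hy2, rfl⟩ := Finset.mem_image.1 hb
        exact hs' x hx y2 hy2 (fun e2 => hne (congrArg _ e2))
          (by simpa [SimpleGraph.comap_adj] using hadj)
      have hle := myLe_alphaW G w _ hstab
      rw [Finset.sum_image (fun x _ y _ hxy => Subtype.ext hxy)] at hle
      calc ∑ x ∈ s', w' x = ∑ x ∈ s', w ↑x :=
            Finset.sum_congr rfl (fun a ha => hw'x a (hne_h a ha))
        _ ≤ alphaW G w := hle
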